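/- Suppose the cost is separable, c(x;ξ) = Σ_{i=1}^d c_i(x;ξ_i) for ξ = (ξ₁,…,ξ_d) ∈ Ξ ⊆ ℝ^d, where each c_i : X × ℝ → ℝ is equicontinuous in x, continuous in ξ_i, integrable under the relevant marginals, and together with the i-th marginal confidence regions satisfies: either the i-th projection of Ξ is bounded, or there is a continuous φ_i : ℝ → [0,∞) with sup_{H∈𝓕_{i,N}} |E_H[φ_i(ζ)] − (1/N)Σ_{j=1}^N φ_i(ξ_i^j)| → 0 almost surely and |c_i(x;ζ)| = O(φ_i(ζ)) for each x. If, for each i = 1,…,d, the univariate test with confidence regions (𝓕_{i,N}) (depending on ξ_i¹,…,ξ_i^N) is uniformly consistent for the i-th marginal F_i of F, then the test of marginals with confidence regions 𝓕_N = { G Borel probability measure on Ξ : the i-th marginal of G lies in 𝓕_{i,N} for every i } is c-consistent for F: almost surely, every sequence (G_N) with G_N ∈ 𝓕_N for all but finitely many N satisfies E_{G_N}[c(x;ξ)] → E_F[c(x;ξ)] for every x ∈ X. -/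

import Mathlib

open MeasureTheory Filter Topology
open scoped ENNReal

noncomputable def cutoff (R t : ℝ) : ℝ := max 0 (1 - max 0 (|t| - R))

lemma cutoff_cont (R : ℝ) : Continuous (cutoff R) :=
  continuous_const.max (continuous_const.sub (continuous_const.max
    (continuous_abs.sub continuous_const)))

lemma cutoff_nonneg (R t : ℝ) : 0 ≤ cutoff R t := le_max_left _ _

lemma cutoff_le_one (R t : ℝ) : cutoff R t ≤ 1 :=
  max_le zero_le_one (sub_le_self _ (le_max_left _ _))

lemma cutoff_eq_one {R t : ℝ} (h : |t| ≤ R) : cutoff R t = 1 := by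
  have : max 0 (|t| - R) = 0 := max_eq_left (sub_nonpos.2 h)
  simp [cutoff, this]

lemma cutoff_eq_zero {R t : ℝ} (h : R + 1 ≤ |t|) : cutoff R t = 0 := by
  have h1 : (1:ℝ) ≤ max 0 (|t| - R) := le_max_of_le_right (by linarith)
  exact max_eq_left (by linarith)

lemma abs_cutoff_le_one (R t : ℝ) : |cutoff R t| ≤ 1 :=
  abs_le.2 ⟨by linarith [cutoff_nonneg R t], cutoff_le_one R t⟩

/-- Weak convergence plus convergence of integrals of a continuous dominating function
implies convergence of integrals of a dominated continuous function. -/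
lemma keyB (T : ℕ → ProbabilityMeasure ℝ) (F0 : ProbabilityMeasure ℝ)
    (hw : Tendsto T atTop (𝓝 F0)) (f φ : ℝ → ℝ) (hf : Continuous f) (hφ : Continuous φ)
    (hφ0 : ∀ t, 0 ≤ φ t) (hbd : ∀ t, |f t| ≤ φ t)
    (hφF : Integrable φ F0.toMeasure) (hφT : ∀ᶠ N in atTop, Integrable φ (T N).toMeasure)
    (hφconv : Tendsto (fun N => ∫ t, φ t ∂(T N).toMeasure) atTop
      (𝓝 (∫ t, φ t ∂F0.toMeasure))) :
    Tendsto (fun N => ∫ t, f t ∂(T N).toMeasure) atTop (𝓝 (∫ t, f t ∂F0.toMeasure)) := by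
  rw [Metric.tendsto_atTop]
  intro ε hε
  -- truncation integrals under `F0` tend to `0`
  have htrunc : Tendsto (fun R : ℕ => ∫ t, φ t * (1 - cutoff R t) ∂F0.toMeasure) atTop
      (𝓝 (∫ t : ℝ, (0:ℝ) ∂F0.toMeasure)) := by
    apply tendsto_integral_of_dominated_convergence φ
    · intro n
      exact (hφ.mul (continuous_const.sub (cutoff_cont _))).aestronglyMeasurable
    · exact hφF
    · intro n
      refine Eventually.of_forall fun t => ?_
      have h1 : 0 ≤ 1 - cutoff n t := by linarith [cutoff_le_one (n:ℝ) t]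
      have h2 : (1:ℝ) - cutoff n t ≤ 1 := by linarith [cutoff_nonneg (n:ℝ) t]
      rw [Real.norm_eq_abs, abs_of_nonneg (mul_nonneg (hφ0 t) h1)]
      exact mul_le_of_le_one_right (hφ0 t) h2
    · refine Eventually.of_forall fun t => ?_
      apply tendsto_atTop_of_eventually_const (i₀ := ⌈|t|⌉₊)
      intro n hn
      have : |t| ≤ (n : ℝ) := (Nat.le_ceil _).trans (Nat.cast_le.2 hn)
      rw [cutoff_eq_one this]
      ring
  rw [integral_zero] at htrunc
  obtain ⟨R, hR⟩ := (htrunc.eventually_lt_const (show (0:ℝ) < ε/4 by positivity)).exists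
  set ψ : ℝ → ℝ := cutoff R with hψdef
  have hψc : Continuous ψ := cutoff_cont _
  -- a bound for `φ` (hence for anything dominated by `φ`) on the support of `ψ`
  obtain ⟨C, hC⟩ := (isCompact_Icc (a := -((R:ℝ)+1)) (b := (R:ℝ)+1)).exists_bound_of_continuousOn
    hφ.continuousOn
  set C0 : ℝ := max C 0 with hC0def
  have hC00 : 0 ≤ C0 := le_max_right _ _
  have hbb : ∀ g : ℝ → ℝ, (∀ t, |g t| ≤ φ t) → ∀ t, ‖g t * ψ t‖ ≤ C0 := by
    intro g hg t
    by_cases h : |t| ≤ (R:ℝ) + 1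
    · have ht : t ∈ Set.Icc (-((R:ℝ)+1)) ((R:ℝ)+1) := abs_le.1 h
      have hφtC : φ t ≤ C0 := by
        have := hC t ht
        rw [Real.norm_eq_abs, abs_of_nonneg (hφ0 t)] at this
        exact this.trans (le_max_left _ _)
      rw [Real.norm_eq_abs, abs_mul]
      calc |g t| * |ψ t| ≤ C0 * 1 :=
            mul_le_mul ((hg t).trans hφtC) (abs_cutoff_le_one _ _) (abs_nonneg _) hC00
        _ = C0 := mul_one _
    · have : ψ t = 0 := cutoff_eq_zero (by push_neg at h; linarith)
      simp [this, hC00]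
  -- bounded continuous versions of `f·ψ` and `φ·ψ`
  have hφabs : ∀ t, |φ t| ≤ φ t := fun t => (abs_of_nonneg (hφ0 t)).le
  set g₁ : BoundedContinuousFunction ℝ ℝ := BoundedContinuousFunction.ofNormedAddCommGroup (fun t => f t * ψ t)
    (hf.mul hψc) C0 (hbb f hbd) with hg₁def
  set g₂ : BoundedContinuousFunction ℝ ℝ := BoundedContinuousFunction.ofNormedAddCommGroup (fun t => φ t * ψ t)
    (hφ.mul hψc) C0 (hbb φ hφabs) with hg₂def
  have h1 := MeasureTheory.ProbabilityMeasure.tendsto_iff_forall_integral_tendsto.mp hw g₁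
  have h2 := MeasureTheory.ProbabilityMeasure.tendsto_iff_forall_integral_tendsto.mp hw g₂
  simp only [hg₁def, hg₂def, BoundedContinuousFunction.coe_ofNormedAddCommGroup] at h1 h2
  -- the key estimate, for any measure under which `φ` is integrable
  have haux : ∀ μ : Measure ℝ, Integrable φ μ →
      |∫ t, f t ∂μ - ∫ t, f t * ψ t ∂μ| ≤ ∫ t, φ t ∂μ - ∫ t, φ t * ψ t ∂μ := by
    intro μ hφμ
    have hfμ : Integrable f μ := hφμ.mono' hf.aestronglyMeasurable
      (Eventually.of_forall fun t => by rw [Real.norm_eq_abs]; exact hbd t)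
    have hfψμ : Integrable (fun t => f t * ψ t) μ := hφμ.mono'
      (hf.mul hψc).aestronglyMeasurable (Eventually.of_forall fun t => by
        rw [Real.norm_eq_abs, abs_mul]
        calc |f t| * |ψ t| ≤ φ t * 1 :=
              mul_le_mul (hbd t) (abs_cutoff_le_one _ _) (abs_nonneg _) (hφ0 t)
          _ = φ t := mul_one _)
    have hφψμ : Integrable (fun t => φ t * ψ t) μ := hφμ.mono'
      (hφ.mul hψc).aestronglyMeasurable (Eventually.of_forall fun t => by
        rw [Real.norm_eq_abs, abs_mul]
        calc |φ t| * |ψ t| ≤ φ t * 1 :=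
              mul_le_mul (hφabs t) (abs_cutoff_le_one _ _) (abs_nonneg _) (hφ0 t)
          _ = φ t := mul_one _)
    rw [← integral_sub hfμ hfψμ, ← integral_sub hφμ hφψμ]
    calc |∫ t, (f t - f t * ψ t) ∂μ| ≤ ∫ t, |f t - f t * ψ t| ∂μ := by
          simpa [Real.norm_eq_abs] using norm_integral_le_integral_norm (fun t => f t - f t * ψ t) (μ := μ)
      _ ≤ ∫ t, (φ t - φ t * ψ t) ∂μ := by
          apply integral_mono (hfμ.sub hfψμ).abs (hφμ.sub hφψμ)
          intro t
          simp only [Pi.sub_apply]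
          have h1 : 0 ≤ 1 - ψ t := by linarith [cutoff_le_one (R:ℝ) t]
          have e1 : |f t - f t * ψ t| = |f t| * (1 - ψ t) := by
            rw [← mul_one_sub, abs_mul, abs_of_nonneg h1]
          rw [e1]
          have : |f t| * (1 - ψ t) ≤ φ t * (1 - ψ t) :=
            mul_le_mul_of_nonneg_right (hbd t) h1
          linarith [this, (mul_one_sub (φ t) (ψ t))]
  -- the truncated `φ`-mass under `F0` is small
  have hφψF0 : Integrable (fun t => φ t * ψ t) F0.toMeasure := hφF.mono'
    (hφ.mul hψc).aestronglyMeasurable (Eventually.of_forall fun t => by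
      rw [Real.norm_eq_abs, abs_mul]
      calc |φ t| * |ψ t| ≤ φ t * 1 :=
            mul_le_mul (hφabs t) (abs_cutoff_le_one _ _) (abs_nonneg _) (hφ0 t)
        _ = φ t := mul_one _)
  have hF0lt : ∫ t, φ t ∂F0.toMeasure - ∫ t, φ t * ψ t ∂F0.toMeasure < ε/4 := by
    have e : ∫ t, φ t ∂F0.toMeasure - ∫ t, φ t * ψ t ∂F0.toMeasure
        = ∫ t, φ t * (1 - ψ t) ∂F0.toMeasure := by
      rw [← integral_sub hφF hφψF0]
      exact integral_congr_ae (Eventually.of_forall fun t => by ring)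
    rw [e]; exact hR
  -- eventual estimates
  have E1 : ∀ᶠ N in atTop,
      |∫ t, f t * ψ t ∂(T N).toMeasure - ∫ t, f t * ψ t ∂F0.toMeasure| < ε/4 := by
    have := h1 (Metric.ball_mem_nhds _ (show (0:ℝ) < ε/4 by positivity))
    filter_upwards [this] with N hN
    simpa [Metric.mem_ball, Real.dist_eq] using hN
  have E2 : ∀ᶠ N in atTop,
      ∫ t, φ t ∂(T N).toMeasure - ∫ t, φ t * ψ t ∂(T N).toMeasure < ε/4 :=
    (hφconv.sub h2).eventually_lt_const hF0lt
  have main : ∀ᶠ N in atTop,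
      |∫ t, f t ∂(T N).toMeasure - ∫ t, f t ∂F0.toMeasure| < ε := by
    filter_upwards [E1, E2, hφT] with N hN1 hN2 hNint
    have a1 := haux (T N).toMeasure hNint
    have a2 := haux F0.toMeasure hφF
    set A := ∫ t, f t ∂(T N).toMeasure
    set B := ∫ t, f t ∂F0.toMeasure
    set A' := ∫ t, f t * ψ t ∂(T N).toMeasure
    set B' := ∫ t, f t * ψ t ∂F0.toMeasure
    have tri : |A - B| ≤ |A' - B'| + |A - A'| + |B - B'| := by
      have e : A - B = (A' - B') + (A - A') - (B - B') := by ring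
      rw [e]
      calc |(A' - B') + (A - A') - (B - B')| ≤ |(A' - B') + (A - A')| + |B - B'| :=
            abs_sub _ _
        _ ≤ |A' - B'| + |A - A'| + |B - B'| := by
            have := abs_add_le (A' - B') (A - A'); linarith
    linarith [tri, a1, a2, hN1, hN2, hF0lt]
  obtain ⟨N₀, hN₀⟩ := eventually_atTop.mp main
  exact ⟨N₀, fun n hn => by rw [Real.dist_eq]; exact hN₀ n hn⟩

/-- The `i`-th (univariate) marginal of a probability measure on `ℝ^d`. -/
noncomputable def marginal {d : ℕ} (G : ProbabilityMeasure (EuclideanSpace ℝ (Fin d)))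
    (i : Fin d) : ProbabilityMeasure ℝ :=
  G.map (f := fun ξv => ξv i) ((measurable_pi_apply i).comp (WithLp.measurable_ofLp 2 _)).aemeasurable

/-- the test of marginals is c-consistent for separable costs.
Suppose `c(x;ξ) = ∑_i c_i(x;ξ_i)` is separable, each `c_i` is equicontinuous in `x`,
continuous in `ξ_i`, integrable under the relevant marginals, and satisfies the stated
boundedness-or-growth condition, and suppose each univariate test `(𝓕_{i,N})` is
uniformly consistent for the `i`-th marginal `F_i` of `F`.  Then the test of marginals
is c-consistent for `F`: almost surely, every sequence `(G_N)` whose marginals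
eventually all lie in the respective regions satisfies
`E_{G_N}[c(x;ξ)] → E_F[c(x;ξ)]` for every `x ∈ X`. -/
theorem stmt15 {d dx : ℕ} {Ω : Type*} [MeasurableSpace Ω]
    (P : Measure Ω) [IsProbabilityMeasure P]
    (Ξ : Set (EuclideanSpace ℝ (Fin d))) (hΞ : IsClosed Ξ)
    (X : Set (EuclideanSpace ℝ (Fin dx))) (hXne : X.Nonempty)
    (F : ProbabilityMeasure (EuclideanSpace ℝ (Fin d))) (hFsupp : F.toMeasure Ξᶜ = 0)
    -- i.i.d. data drawn from `F`
    (ξ : ℕ → Ω → EuclideanSpace ℝ (Fin d)) (hξmeas : ∀ i, Measurable (ξ i))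
    (hiid : ProbabilityTheory.iIndepFun ξ P)
    (hdist : ∀ i, Measure.map (ξ i) P = F.toMeasure)
    -- the univariate confidence regions for each coordinate
    (𝓕i : Fin d → ℕ → Ω → Set (ProbabilityMeasure ℝ))
    -- the separable cost `c(x;ξ) = ∑ i, ci i x (ξ i)`
    (ci : Fin d → EuclideanSpace ℝ (Fin dx) → ℝ → ℝ)
    (hcmeas : ∀ i, ∀ x ∈ X, Measurable (ci i x))
    -- each `c_i` equicontinuous in `x` and continuous in `ξ_i`
    (hequi : ∀ i, ∀ x ∈ X, ∀ ε > (0:ℝ), ∃ δ > (0:ℝ), ∀ x' ∈ X, ‖x - x'‖ < δ →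
      ∀ t : ℝ, |ci i x t - ci i x' t| < ε)
    (hcont : ∀ i, ∀ x ∈ X, Continuous (ci i x))
    -- integrability under the relevant marginals
    (hFint : ∀ i, ∀ x ∈ X, Integrable (ci i x) (marginal F i).toMeasure)
    (h𝓕int : ∀ i N ω, ∀ H ∈ 𝓕i i N ω, ∀ x ∈ X, Integrable (ci i x) H.toMeasure)
    -- boundedness of the `i`-th projection of `Ξ`, or growth control via `φ_i`
    (hgrow : ∀ i : Fin d, Bornology.IsBounded ((fun ξv => ξv i) '' Ξ) ∨
      ∃ φi : ℝ → ℝ, Continuous φi ∧ (∀ t, 0 ≤ φi t) ∧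
        Integrable φi (marginal F i).toMeasure ∧
        (∀ N ω, ∀ H ∈ 𝓕i i N ω, Integrable φi H.toMeasure) ∧
        (∀ᵐ ω ∂P, ∀ ε > (0:ℝ), ∀ᶠ N in atTop, ∀ H ∈ 𝓕i i N ω,
          |∫ t, φi t ∂H.toMeasure - (∑ k ∈ Finset.range N, φi (ξ k ω i)) / N| ≤ ε) ∧
        (∀ x ∈ X, ∃ ν η : ℝ, ∀ t : ℝ, |ci i x t| ≤ ν + η * φi t))
    -- each univariate test uniformly consistent for the `i`-th marginal of `F`
    (hUCi : ∀ i : Fin d, ∀ᵐ ω ∂P, ∀ H : ℕ → ProbabilityMeasure ℝ,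
      ¬ Tendsto H atTop (𝓝 (marginal F i)) → ∃ᶠ N in atTop, H N ∉ 𝓕i i N ω) :
    -- c-consistency of the test of marginals
    ∀ᵐ ω ∂P, ∀ G : ℕ → ProbabilityMeasure (EuclideanSpace ℝ (Fin d)),
      (∀ N, (G N).toMeasure Ξᶜ = 0) →
      (∀ᶠ N in atTop, ∀ i : Fin d, marginal (G N) i ∈ 𝓕i i N ω) →
      ∀ x ∈ X, Tendsto (fun N => ∫ ξv, (∑ i, ci i x (ξv i)) ∂(G N).toMeasure) atTop
        (𝓝 (∫ ξv, (∑ i, ci i x (ξv i)) ∂F.toMeasure)) := by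
  classical
  have hev : ∀ i : Fin d, Measurable (fun ξv : EuclideanSpace ℝ (Fin d) => ξv i) :=
    fun i => (measurable_pi_apply i).comp (WithLp.measurable_ofLp 2 _)
  -- basic facts about marginals
  have hmargmap : ∀ (G : ProbabilityMeasure (EuclideanSpace ℝ (Fin d))) (i : Fin d),
      (marginal G i).toMeasure = G.toMeasure.map (fun ξv => ξv i) := by
    intro G i
    simp [marginal]
  set S : Fin d → Set ℝ := fun i => closure ((fun ξv => ξv i) '' Ξ) with hSdef
  have hsuppS : ∀ (G : ProbabilityMeasure (EuclideanSpace ℝ (Fin d))),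
      G.toMeasure Ξᶜ = 0 → ∀ i, (marginal G i).toMeasure (S i)ᶜ = 0 := by
    intro G hG i
    have hmeasS : MeasurableSet (S i)ᶜ := isClosed_closure.measurableSet.compl
    rw [hmargmap, Measure.map_apply (hev i) hmeasS]
    refine measure_mono_null ?_ hG
    intro ξv hξv hΞv
    exact hξv (subset_closure ⟨ξv, hΞv, rfl⟩)
  have hint_pull : ∀ (G : ProbabilityMeasure (EuclideanSpace ℝ (Fin d))) (i : Fin d),
      ∀ x ∈ X, Integrable (ci i x) (marginal G i).toMeasure →
      Integrable (fun ξv => ci i x (ξv i)) G.toMeasure := by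
    intro G i x hx h
    rw [hmargmap] at h
    exact (integrable_map_measure (hcmeas i x hx).aestronglyMeasurable
      (hev i).aemeasurable).mp h
  have hint_eq : ∀ (G : ProbabilityMeasure (EuclideanSpace ℝ (Fin d))) (i : Fin d),
      ∀ x ∈ X, ∫ t, ci i x t ∂(marginal G i).toMeasure
        = ∫ ξv, ci i x (ξv i) ∂G.toMeasure := by
    intro G i x hx
    rw [hmargmap]
    exact integral_map (hev i).aemeasurable
      (hcmeas i x hx).aestronglyMeasurable
  have hsplit : ∀ (G : ProbabilityMeasure (EuclideanSpace ℝ (Fin d))), ∀ x ∈ X,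
      (∀ i, Integrable (ci i x) (marginal G i).toMeasure) →
      ∫ ξv, (∑ i, ci i x (ξv i)) ∂G.toMeasure
        = ∑ i, ∫ t, ci i x t ∂(marginal G i).toMeasure := by
    intro G x hx hint
    rw [integral_finset_sum _ (fun i _ => hint_pull G i x hx (hint i))]
    exact Finset.sum_congr rfl fun i _ => (hint_eq G i x hx).symm
  -- the key per-coordinate statement
  have key : ∀ i : Fin d, ∀ᵐ ω ∂P, ∀ T : ℕ → ProbabilityMeasure ℝ,
      (∀ N, (T N).toMeasure (S i)ᶜ = 0) →
      (∀ᶠ N in atTop, T N ∈ 𝓕i i N ω) →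
      ∀ x ∈ X, Tendsto (fun N => ∫ t, ci i x t ∂(T N).toMeasure) atTop
        (𝓝 (∫ t, ci i x t ∂(marginal F i).toMeasure)) := by
    intro i
    rcases hgrow i with hb | ⟨φi, hφc, hφ0, hφF, hφ𝓕, hφae, hdom⟩
    · -- bounded case
      filter_upwards [hUCi i] with ω hUC T hTs hTm x hx
      have hw : Tendsto T atTop (𝓝 (marginal F i)) := by
        by_contra hcon
        obtain ⟨N, hmem, hnot⟩ := (hTm.and_frequently (hUC T hcon)).exists
        exact hnot hmem
      obtain ⟨R0, hR0⟩ := (hb.closure).subset_closedBall 0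
      set R : ℝ := max R0 0 with hRdef
      set ψ : ℝ → ℝ := cutoff R with hψdef
      have hψc : Continuous ψ := cutoff_cont _
      set f : ℝ → ℝ := ci i x with hfdef
      have hf : Continuous f := hcont i x hx
      -- bound for f·ψ
      obtain ⟨C, hC⟩ := (isCompact_Icc (a := -(R+1)) (b := R+1)).exists_bound_of_continuousOn
        hf.continuousOn
      set C0 : ℝ := max C 0 with hC0def
      have hC00 : 0 ≤ C0 := le_max_right _ _
      have hbb : ∀ t, ‖f t * ψ t‖ ≤ C0 := by
        intro t
        by_cases h : |t| ≤ R + 1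
        · have ht : t ∈ Set.Icc (-(R+1)) (R+1) := abs_le.1 h
          rw [Real.norm_eq_abs, abs_mul]
          calc |f t| * |ψ t| ≤ C0 * 1 := by
                refine mul_le_mul ?_ (abs_cutoff_le_one _ _) (abs_nonneg _) hC00
                exact ((Real.norm_eq_abs _).symm.le.trans (hC t ht)).trans (le_max_left _ _)
            _ = C0 := mul_one _
        · have : ψ t = 0 := cutoff_eq_zero (by push_neg at h; linarith)
          simp [this, hC00]
      set g : BoundedContinuousFunction ℝ ℝ :=
        BoundedContinuousFunction.ofNormedAddCommGroup (fun t => f t * ψ t)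
          (hf.mul hψc) C0 hbb with hgdef
      have hport := MeasureTheory.ProbabilityMeasure.tendsto_iff_forall_integral_tendsto.mp hw g
      simp only [hgdef, BoundedContinuousFunction.coe_ofNormedAddCommGroup] at hport
      -- on the support, ψ = 1
      have hcongr : ∀ μ : Measure ℝ, μ (S i)ᶜ = 0 →
          ∫ t, f t * ψ t ∂μ = ∫ t, f t ∂μ := by
        intro μ hμ
        refine integral_congr_ae ?_
        have hae : ∀ᵐ t ∂μ, t ∈ S i := by
          rw [ae_iff]
          exact hμ
        filter_upwards [hae] with t ht
        have htR : |t| ≤ R := by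
          have := hR0 ht
          rw [Metric.mem_closedBall, Real.dist_eq, sub_zero] at this
          exact this.trans (le_max_left _ _)
        rw [show ψ t = 1 from cutoff_eq_one htR, mul_one]
      have e1 : ∀ N, ∫ t, f t * ψ t ∂(T N).toMeasure = ∫ t, f t ∂(T N).toMeasure :=
        fun N => hcongr _ (hTs N)
      have e2 : ∫ t, f t * ψ t ∂(marginal F i).toMeasure
          = ∫ t, f t ∂(marginal F i).toMeasure := hcongr _ (hsuppS F hFsupp i)
      rw [← e2]
      exact hport.congr e1
    · -- growth case: strong law of large numbers for φi
      have hmap0 : P.map ((fun ξv : EuclideanSpace ℝ (Fin d) => ξv i) ∘ ξ 0)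
          = (marginal F i).toMeasure := by
        rw [hmargmap F i, ← hdist 0, Measure.map_map (hev i) (hξmeas 0)]
      have hYmeas : ∀ k, Measurable (fun ω => φi (ξ k ω i)) :=
        fun k => hφc.measurable.comp ((hev i).comp (hξmeas k))
      have hYint : Integrable (fun ω => φi (ξ 0 ω i)) P := by
        have := (integrable_map_measure hφc.aestronglyMeasurable
          ((hev i).comp (hξmeas 0)).aemeasurable).mp
          (by rw [hmap0]; exact hφF)
        exact this
      have hindep : Pairwise (Function.onFun (ProbabilityTheory.IndepFun · · P)
          (fun k ω => φi (ξ k ω i))) := by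
        intro k l hkl
        have h := hiid.indepFun hkl
        exact h.comp (hφc.measurable.comp (hev i))
          (hφc.measurable.comp (hev i))
      have hident : ∀ k, ProbabilityTheory.IdentDistrib (fun ω => φi (ξ k ω i))
          (fun ω => φi (ξ 0 ω i)) P P := by
        intro k
        have base : ProbabilityTheory.IdentDistrib (ξ k) (ξ 0) P P :=
          ⟨(hξmeas k).aemeasurable, (hξmeas 0).aemeasurable, by rw [hdist k, hdist 0]⟩
        exact base.comp (hφc.measurable.comp (hev i))
      have hSLLN := ProbabilityTheory.strong_law_ae_real _ hYint hindep hident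
      have hEeq : (∫ ω, φi (ξ 0 ω i) ∂P) = ∫ t, φi t ∂(marginal F i).toMeasure := by
        rw [← hmap0, integral_map ((hev i).comp (hξmeas 0)).aemeasurable
          hφc.aestronglyMeasurable]
        rfl
      rw [hEeq] at hSLLN
      filter_upwards [hUCi i, hφae, hSLLN] with ω hUC hae hlln T hTs hTm x hx
      have hw : Tendsto T atTop (𝓝 (marginal F i)) := by
        by_contra hcon
        obtain ⟨N, hmem, hnot⟩ := (hTm.and_frequently (hUC T hcon)).exists
        exact hnot hmem
      set L : ℝ := ∫ t, φi t ∂(marginal F i).toMeasure with hLdef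
      set A : ℕ → ℝ := fun N => (∑ k ∈ Finset.range N, φi (ξ k ω i)) / N with hAdef
      have hφconv : Tendsto (fun N => ∫ t, φi t ∂(T N).toMeasure) atTop (𝓝 L) := by
        rw [Metric.tendsto_atTop]
        intro ε hε
        have h1 := hae (ε/3) (by positivity)
        have h2 : ∀ᶠ N in atTop, |A N - L| < ε/3 := by
          have := hlln (Metric.ball_mem_nhds _ (show (0:ℝ) < ε/3 by positivity))
          filter_upwards [this] with N hN
          simpa [Metric.mem_ball, Real.dist_eq] using hN
        have h3 : ∀ᶠ N in atTop, |∫ t, φi t ∂(T N).toMeasure - L| < ε := by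
          filter_upwards [h1, h2, hTm] with N hN1 hN2 hNm
          have hb1 := hN1 _ hNm
          calc |∫ t, φi t ∂(T N).toMeasure - L|
              ≤ |∫ t, φi t ∂(T N).toMeasure - A N| + |A N - L| := abs_sub_le _ _ _
            _ < ε/3 + ε/3 := by
                have : |∫ t, φi t ∂(T N).toMeasure - A N| ≤ ε/3 := hb1
                linarith
            _ < ε := by linarith
        obtain ⟨N₀, h⟩ := eventually_atTop.mp h3
        exact ⟨N₀, fun n hn => by rw [Real.dist_eq]; exact h n hn⟩
      obtain ⟨ν, η, hνη⟩ := hdom x hx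
      set φ' : ℝ → ℝ := fun t => |ν| + |η| * φi t with hφ'def
      have hφ'c : Continuous φ' := continuous_const.add (continuous_const.mul hφc)
      have hφ'0 : ∀ t, 0 ≤ φ' t :=
        fun t => add_nonneg (abs_nonneg _) (mul_nonneg (abs_nonneg _) (hφ0 t))
      have hbd' : ∀ t, |ci i x t| ≤ φ' t := by
        intro t
        calc |ci i x t| ≤ ν + η * φi t := hνη t
          _ ≤ |ν| + |η| * φi t := add_le_add (le_abs_self _)
              (mul_le_mul_of_nonneg_right (le_abs_self _) (hφ0 t))
      have hφ'int_eq : ∀ μ : Measure ℝ, IsProbabilityMeasure μ → Integrable φi μ →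
          ∫ t, φ' t ∂μ = |ν| + |η| * ∫ t, φi t ∂μ := by
        intro μ hμ hint
        rw [integral_add (integrable_const _) (hint.const_mul _), integral_const,
          integral_const_mul]
        simp
      have hφ'F : Integrable φ' (marginal F i).toMeasure :=
        (integrable_const _).add (hφF.const_mul _)
      have hφ'T : ∀ᶠ N in atTop, Integrable φ' (T N).toMeasure :=
        hTm.mono fun N hm => (integrable_const _).add ((hφ𝓕 N ω _ hm).const_mul _)
      have hφ'conv : Tendsto (fun N => ∫ t, φ' t ∂(T N).toMeasure) atTop
          (𝓝 (∫ t, φ' t ∂(marginal F i).toMeasure)) := by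
        rw [hφ'int_eq _ inferInstance hφF]
        refine Tendsto.congr' ?_ (tendsto_const_nhds.add (hφconv.const_mul |η|))
        filter_upwards [hTm] with N hm
        exact (hφ'int_eq _ inferInstance (hφ𝓕 N ω _ hm)).symm
      exact keyB T (marginal F i) hw _ φ' (hcont i x hx) hφ'c hφ'0 hbd' hφ'F hφ'T hφ'conv
  -- assemble
  filter_upwards [ae_all_iff.2 key] with ω hω G hGsupp hGmem x hx
  have hconv : ∀ i : Fin d, Tendsto (fun N => ∫ t, ci i x t ∂(marginal (G N) i).toMeasure)
      atTop (𝓝 (∫ t, ci i x t ∂(marginal F i).toMeasure)) := by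
    intro i
    exact hω i (fun N => marginal (G N) i) (fun N => hsuppS (G N) (hGsupp N) i)
      (hGmem.mono fun N h => h i) x hx
  have hsum : Tendsto (fun N => ∑ i, ∫ t, ci i x t ∂(marginal (G N) i).toMeasure) atTop
      (𝓝 (∑ i, ∫ t, ci i x t ∂(marginal F i).toMeasure)) :=
    tendsto_finset_sum _ fun i _ => hconv i
  have hFeq : ∫ ξv, (∑ i, ci i x (ξv i)) ∂F.toMeasure
      = ∑ i, ∫ t, ci i x t ∂(marginal F i).toMeasure :=
    hsplit F x hx fun i => hFint i x hx
  rw [hFeq]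
  refine Tendsto.congr' ?_ hsum
  filter_upwards [hGmem] with N hm
  exact (hsplit (G N) x hx fun i => h𝓕int i N ω _ (hm i) x hx).symm
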